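/- The reference interaction reproduces the extra statistics (two parties): let |e⟩ = sin(π/8)|0⟩ + cos(π/8)|1⟩ (the +1 eigenvector of (X−Z)/√2), |+⟩ = (|0⟩+|1⟩)/√2, and ψ = 𝒰 (|e⟩ ⊗ |+⟩) ∈ ℂ² ⊗ ℂ². Then ⟨ψ| (I₂ ⊗ X) |ψ⟩ = 1 and ⟨ψ| (Z ⊗ I₂) |ψ⟩ = −1 (in fact ψ = |1⟩ ⊗ |+⟩). -/

import Mathlib

/-!
The reference interaction reproduces the extra statistics (two parties):
for `ψ = 𝒰 (|e⟩ ⊗ |+⟩)` one has `⟨ψ| (I ⊗ X) |ψ⟩ = 1`, `⟨ψ| (Z ⊗ I) |ψ⟩ = −1`,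
and in fact `ψ = |1⟩ ⊗ |+⟩`.
-/

open Matrix Finset
open scoped Matrix Kronecker ComplexOrder

noncomputable section

def PauliX : Matrix (Fin 2) (Fin 2) ℂ := !![0, 1; 1, 0]

def PauliZ : Matrix (Fin 2) (Fin 2) ℂ := !![1, 0; 0, -1]

/-- The Bell state `|φ_{a,b}⟩ = (|a b⟩ + (−1)^a |1−a, 1−b⟩)/√2`. -/
def bellVec (a b : Fin 2) : Fin 2 × Fin 2 → ℂ := fun p =>
  (Real.sqrt 2 : ℂ)⁻¹ *
    ((if p = (a, b) then 1 else 0) +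
      (-1 : ℂ) ^ (a : ℕ) * (if p = (a + 1, b + 1) then 1 else 0))

/-- Computational basis vector `|a⟩` of `ℂ²`. -/
def ketF (a : Fin 2) : Fin 2 → ℂ := fun i => if i = a then 1 else 0

/-- `|0̄⟩, |1̄⟩`: the eigenvectors of `(X+Z)/√2`. -/
def barKet : Fin 2 → Fin 2 → ℂ :=
  ![![(Real.cos (Real.pi / 8) : ℂ), (Real.sin (Real.pi / 8) : ℂ)],
    ![-(Real.sin (Real.pi / 8) : ℂ), (Real.cos (Real.pi / 8) : ℂ)]]

/-- Kronecker product of two vectors in `ℂ²`. -/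
def vkron (u v : Fin 2 → ℂ) : Fin 2 × Fin 2 → ℂ := fun p => u p.1 * v p.2

/-- The reference interaction `𝒰 = Σ_{a,b} |φ_{a,b}⟩⟨ā, b|`. -/
def Umat : Matrix (Fin 2 × Fin 2) (Fin 2 × Fin 2) ℂ :=
  ∑ a : Fin 2, ∑ b : Fin 2, vecMulVec (bellVec a b) (star (vkron (barKet a) (ketF b)))

/-- `|e⟩ = sin(π/8)|0⟩ + cos(π/8)|1⟩`, the `+1` eigenvector of `(X−Z)/√2`. -/
def eKet : Fin 2 → ℂ := ![(Real.sin (Real.pi / 8) : ℂ), (Real.cos (Real.pi / 8) : ℂ)]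

/-- `|+⟩ = (|0⟩+|1⟩)/√2`. -/
def plusKet : Fin 2 → ℂ := fun _ => (Real.sqrt 2 : ℂ)⁻¹


lemma sqrt2_sq : (Real.sqrt 2 : ℂ) * (Real.sqrt 2 : ℂ) = 2 := by
  norm_cast
  exact Real.mul_self_sqrt (by norm_num)

lemma half_sqrt : (Real.sqrt 2 / 2 : ℝ) = (Real.sqrt 2)⁻¹ := by
  rw [eq_comm, inv_eq_one_div, div_eq_div_iff (by positivity) (by norm_num),
    one_mul, Real.mul_self_sqrt (by norm_num)]

lemma hcs : (Real.cos (Real.pi/8) : ℂ)^2 - (Real.sin (Real.pi/8) : ℂ)^2 = (Real.sqrt 2 : ℂ)⁻¹ := by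
  have h := (Real.cos_two_mul' (Real.pi/8)).symm
  have e : 2 * (Real.pi/8) = Real.pi/4 := by ring
  rw [e, Real.cos_pi_div_four, half_sqrt] at h
  exact_mod_cast congrArg (Complex.ofReal) h

lemma hsc : 2 * (Real.sin (Real.pi/8) : ℂ) * (Real.cos (Real.pi/8) : ℂ) = (Real.sqrt 2 : ℂ)⁻¹ := by
  have h := (Real.sin_two_mul (Real.pi/8)).symm
  have e : 2 * (Real.pi/8) = Real.pi/4 := by ring
  rw [e, Real.sin_pi_div_four, half_sqrt] at h
  exact_mod_cast congrArg (Complex.ofReal) h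

lemma hpsi : Umat *ᵥ vkron eKet plusKet = vkron (ketF 1) plusKet := by
  funext p
  have hs2 := sqrt2_sq
  have h1 := hcs
  have h2 := hsc
  have hu : ((Real.sqrt 2:ℂ))⁻¹ * ((Real.sqrt 2:ℂ))⁻¹ = 2⁻¹ := by
    rw [← mul_inv, sqrt2_sq]
  fin_cases p <;>
  · simp [Umat, mulVec, dotProduct, bellVec, ketF, barKet, vkron, eKet, plusKet,
      vecMulVec_apply, Matrix.sum_apply, Fintype.sum_prod_type, Fin.sum_univ_two,
      Pi.star_apply, star_mul', Complex.conj_ofReal, Prod.ext_iff,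
      -Real.cos_pi_div_eight, -Real.sin_pi_div_eight,
      -Complex.ofReal_cos, -Complex.ofReal_sin]
    all_goals
      first
      | linear_combination ((Real.sqrt 2:ℂ))⁻¹^2 * h2 - ((Real.sqrt 2:ℂ))⁻¹^2 * h1
      | linear_combination ((Real.sqrt 2:ℂ))⁻¹^2 * h2 + ((Real.sqrt 2:ℂ))⁻¹^2 * h1 +
          2 * ((Real.sqrt 2:ℂ))⁻¹ * hu

theorem reference_interaction_extra_statistics :
    star (Umat *ᵥ vkron eKet plusKet) ⬝ᵥ
        (((1 : Matrix (Fin 2) (Fin 2) ℂ) ⊗ₖ PauliX) *ᵥ (Umat *ᵥ vkron eKet plusKet)) = 1 ∧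
    star (Umat *ᵥ vkron eKet plusKet) ⬝ᵥ
        ((PauliZ ⊗ₖ (1 : Matrix (Fin 2) (Fin 2) ℂ)) *ᵥ (Umat *ᵥ vkron eKet plusKet)) = -1 ∧
    Umat *ᵥ vkron eKet plusKet = vkron (ketF 1) plusKet := by
  rw [hpsi]
  have hs2 := sqrt2_sq
  refine ⟨?_, ?_, rfl⟩ <;>
  · simp [mulVec, dotProduct, vkron, ketF, plusKet, PauliX, PauliZ, kroneckerMap_apply,
      Fintype.sum_prod_type, Fin.sum_univ_two, Matrix.one_apply, Pi.star_apply, star_mul',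
      Complex.conj_ofReal, Prod.ext_iff]
    field_simp
    try linear_combination hs2
    try linear_combination -hs2


end
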